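/- Let F be the free groupoid on four generators x₁, x₂, x₃, x₄ satisfying (x*y)*z = y*(z*x), i.e., the quotient of FreeMagma(Fin 4) by the smallest multiplicative congruence containing all substitution instances of this identity. Then the classes of ((x₁*x₂)*x₃)*x₄ and ((x₂*x₁)*x₃)*x₄ in F are distinct. In particular, the identity (x*y)*z = y*(z*x) is not 4AC-nice: there is a magma satisfying it that is not 4AC-nice. -/

import Mathlib

/-- Bracketings: full binary trees in which every internal node has two children. -/
inductive Brack : Type
  | leaf : Brack
  | node : Brack → Brack → Brack

/-- Number of leaves of a bracketing. -/
def Brack.leaves : Brack → ℕ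
  | .leaf => 1
  | .node l r => l.leaves + r.leaves

/-- The `s`-product in a magma `G`: evaluate the bracketing `s`, labelling its leaves
from left to right by `a k, a (k+1), …`. -/
def Brack.eval {G : Type*} [Mul G] : Brack → (ℕ → G) → ℕ → G
  | .leaf, a, k => a k
  | .node l r, a, k => l.eval a k * r.eval a (k + l.leaves)

/-- Extend a permutation of `{0, …, n−1}` to `ℕ` (identity elsewhere). -/
def permNat {n : ℕ} (f : Equiv.Perm (Fin n)) (i : ℕ) : ℕ :=
  if h : i < n then (f ⟨i, h⟩ : ℕ) else i

/-- A magma `G` satisfies the linear identity `⟨s, t, f⟩` if for all `a₁, …, aₙ ∈ G`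
the `s`-product of `(a₁, …, aₙ)` equals the `t`-product of `(a_{f(1)}, …, a_{f(n)})`. -/
def Satisfies (G : Type*) [Mul G] {n : ℕ} (s t : Brack) (f : Equiv.Perm (Fin n)) : Prop :=
  ∀ a : ℕ → G, s.eval a 0 = t.eval (fun i => a (permNat f i)) 0

/-- A magma `G` is `m`AC-nice if any two products of the same `m` elements coincide:
for every `a`, all bracketings `s, t` with `m` leaves and all permutations `f, g`,
the `s`-product of `(a_{f(1)}, …, a_{f(m)})` equals the `t`-product of
`(a_{g(1)}, …, a_{g(m)})`. -/
def ACnice (G : Type*) [Mul G] (m : ℕ) : Prop :=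
  ∀ (a : ℕ → G) (s t : Brack), s.leaves = m → t.leaves = m →
    ∀ f g : Equiv.Perm (Fin m),
      s.eval (fun i => a (permNat f i)) 0 = t.eval (fun i => a (permNat g i)) 0

/-- Substitution instances of the identity `(xy)z = y(zx)` in the free magma on four
generators: images of the pair `((x₁x₂)x₃, x₂(x₃x₁))` under magma homomorphisms
`FreeMagma (Fin 3) → FreeMagma (Fin 4)`. -/
def hRel (x y : FreeMagma (Fin 4)) : Prop :=
  ∃ σ : FreeMagma (Fin 3) →ₙ* FreeMagma (Fin 4),
    x = σ ((FreeMagma.of 0 * FreeMagma.of 1) * FreeMagma.of 2) ∧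
    y = σ (FreeMagma.of 1 * (FreeMagma.of 2 * FreeMagma.of 0))

def magFn : Nat → Nat → Fin 9
  | 0, 0 => 2
  | 0, 1 => 4
  | 0, 2 => 5
  | 0, 3 => 5
  | 0, 4 => 6
  | 0, 5 => 7
  | 1, 0 => 3
  | 1, 1 => 4
  | 1, 2 => 7
  | 1, 3 => 7
  | 1, 4 => 7
  | 1, 5 => 7
  | 2, 0 => 5
  | 2, 1 => 5
  | 2, 2 => 7
  | 3, 0 => 6
  | 3, 1 => 6
  | 3, 2 => 7
  | 4, 0 => 7
  | 4, 1 => 7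
  | 4, 2 => 7
  | 5, 0 => 7
  | 6, 0 => 7
  | _, _ => 8

def magOp (i j : Fin 9) : Fin 9 := magFn i.val j.val

theorem magId : ∀ x y z : Fin 9, magOp (magOp x y) z = magOp y (magOp z x) := by decide

theorem magNe : magOp (magOp (magOp 0 1) 0) 0 ≠ magOp (magOp (magOp 1 0) 0) 0 := by decide

abbrev MM : Type := Fin 9
instance instMM : Mul MM := ⟨magOp⟩

def genMap : Fin 4 → MM := fun i => if i = 1 then 1 else 0

def phi : FreeMagma (Fin 4) →ₙ* MM := FreeMagma.lift genMap

def Kcon : Con (FreeMagma (Fin 4)) where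
  r x y := phi x = phi y
  iseqv := ⟨fun _ => rfl, Eq.symm, Eq.trans⟩
  mul' := by
    intro a b c d h1 h2
    simp only [map_mul]
    exact congrArg₂ (· * ·) h1 h2

def combS : Brack := .node (.node (.node .leaf .leaf) .leaf) .leaf

/-- In the free groupoid on four generators satisfying `(xy)z = y(zx)` (the quotient of
`FreeMagma (Fin 4)` by the smallest congruence containing all substitution instances of
this identity), the classes of `((x₁x₂)x₃)x₄` and `((x₂x₁)x₃)x₄` are distinct; in
particular, there is a magma satisfying `(xy)z = y(zx)` that is not `4`AC-nice. -/
theorem stmt16 :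
    Quotient.mk (conGen hRel).toSetoid
        (((FreeMagma.of 0 * FreeMagma.of 1) * FreeMagma.of 2) * FreeMagma.of 3) ≠
      Quotient.mk (conGen hRel).toSetoid
        (((FreeMagma.of 1 * FreeMagma.of 0) * FreeMagma.of 2) * FreeMagma.of 3) ∧
    ∃ (G : Type) (inst : Mul G),
      (∀ x y z : G, (x * y) * z = y * (z * x)) ∧ ¬@ACnice G inst 4 := by
  have hsub : conGen hRel ≤ Kcon := by
    apply Con.conGen_le.mpr
    rintro x y ⟨σ, rfl, rfl⟩
    show phi _ = phi _
    simp only [map_mul]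
    exact magId _ _ _
  constructor
  · intro h
    have h2 : Kcon _ _ := hsub (Quotient.exact h)
    have h3 : phi (((FreeMagma.of 0 * FreeMagma.of 1) * FreeMagma.of 2) * FreeMagma.of 3)
        = phi (((FreeMagma.of 1 * FreeMagma.of 0) * FreeMagma.of 2) * FreeMagma.of 3) := h2
    simp only [phi, map_mul, FreeMagma.lift_of] at h3
    exact absurd h3 (by decide)
  · refine ⟨MM, instMM, fun x y z => magId x y z, ?_⟩
    intro h
    have := h (fun n => if n = 1 then 1 else 0) combS combS rfl rfl 1 (Equiv.swap 0 1)
    exact absurd this (by decide)
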